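/- arXiv:1302.1146 — 3 statements merged into one kernel-verified Lean document; each statement's English description precedes it below -/
import Mathlib

section
/- The group presented on six generators a, b, c, d, e, f with the six relations a·e·b⁻¹ = 1, b·f·c⁻¹ = 1, c·d·a⁻¹ = 1, a⁻¹·d·b = 1, b⁻¹·e·c = 1, c⁻¹·f·a = 1 (the trefoil template presentation) is isomorphic to the group presented on two generators x, y with the single relation x·y·x = y·x·y (the trefoil knot group). -/
/-- The six relations of the trefoil template presentation on generators
`a, b, c, d, e, f` (encoded as `0, …, 5 : Fin 6`):
`a·e·b⁻¹`, `b·f·c⁻¹`, `c·d·a⁻¹`, `a⁻¹·d·b`, `b⁻¹·e·c`, `c⁻¹·f·a`. -/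
def trefoilTemplateRels : Set (FreeGroup (Fin 6)) :=
  let a := FreeGroup.of (0 : Fin 6)
  let b := FreeGroup.of (1 : Fin 6)
  let c := FreeGroup.of (2 : Fin 6)
  let d := FreeGroup.of (3 : Fin 6)
  let e := FreeGroup.of (4 : Fin 6)
  let f := FreeGroup.of (5 : Fin 6)
  {a * e * b⁻¹, b * f * c⁻¹, c * d * a⁻¹, a⁻¹ * d * b, b⁻¹ * e * c, c⁻¹ * f * a}

/-- The single relation `x·y·x·(y·x·y)⁻¹` of the trefoil knot group on
generators `x, y` (encoded as `0, 1 : Fin 2`). -/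
def trefoilKnotRels : Set (FreeGroup (Fin 2)) :=
  let x := FreeGroup.of (0 : Fin 2)
  let y := FreeGroup.of (1 : Fin 2)
  {x * y * x * (y * x * y)⁻¹}

namespace TrefoilAux

lemma rel_eq_one {α : Type*} {rels : Set (FreeGroup α)} {r : FreeGroup α} (h : r ∈ rels) :
    PresentedGroup.mk rels r = 1 :=
  (QuotientGroup.eq_one_iff _).mpr (Subgroup.subset_normalClosure h)

abbrev T := PresentedGroup trefoilTemplateRels
abbrev K := PresentedGroup trefoilKnotRels

def A : T := .of 0
def B : T := .of 1
def C : T := .of 2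
def D : T := .of 3
def E : T := .of 4
def F : T := .of 5
def X : K := .of 0
def Y : K := .of 1

lemma mkT (i : Fin 6) : PresentedGroup.mk trefoilTemplateRels (FreeGroup.of i) = .of i := rfl
lemma mkK (i : Fin 2) : PresentedGroup.mk trefoilKnotRels (FreeGroup.of i) = .of i := rfl

lemma relK : X * Y * X = Y * X * Y := by
  have h := rel_eq_one (rels := trefoilKnotRels)
    (r := FreeGroup.of 0 * FreeGroup.of 1 * FreeGroup.of 0 *
      (FreeGroup.of 1 * FreeGroup.of 0 * FreeGroup.of 1)⁻¹) (by simp [trefoilKnotRels])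
  simp only [map_mul, map_inv, mkK, mul_inv_eq_one] at h
  exact h

lemma h1 : A * E * B⁻¹ = 1 := by
  have h := rel_eq_one (rels := trefoilTemplateRels)
    (r := FreeGroup.of 0 * FreeGroup.of 4 * (FreeGroup.of 1)⁻¹) (by simp [trefoilTemplateRels])
  simpa only [map_mul, map_inv, mkT, A, B, C, D, E, F] using h

lemma h2 : B * F * C⁻¹ = 1 := by
  have h := rel_eq_one (rels := trefoilTemplateRels)
    (r := FreeGroup.of 1 * FreeGroup.of 5 * (FreeGroup.of 2)⁻¹) (by simp [trefoilTemplateRels])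
  simpa only [map_mul, map_inv, mkT, A, B, C, D, E, F] using h

lemma h3 : C * D * A⁻¹ = 1 := by
  have h := rel_eq_one (rels := trefoilTemplateRels)
    (r := FreeGroup.of 2 * FreeGroup.of 3 * (FreeGroup.of 0)⁻¹) (by simp [trefoilTemplateRels])
  simpa only [map_mul, map_inv, mkT, A, B, C, D, E, F] using h

lemma h4 : A⁻¹ * D * B = 1 := by
  have h := rel_eq_one (rels := trefoilTemplateRels)
    (r := (FreeGroup.of 0)⁻¹ * FreeGroup.of 3 * FreeGroup.of 1) (by simp [trefoilTemplateRels])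
  simpa only [map_mul, map_inv, mkT, A, B, C, D, E, F] using h

lemma h5 : B⁻¹ * E * C = 1 := by
  have h := rel_eq_one (rels := trefoilTemplateRels)
    (r := (FreeGroup.of 1)⁻¹ * FreeGroup.of 4 * FreeGroup.of 2) (by simp [trefoilTemplateRels])
  simpa only [map_mul, map_inv, mkT, A, B, C, D, E, F] using h

lemma h6 : C⁻¹ * F * A = 1 := by
  have h := rel_eq_one (rels := trefoilTemplateRels)
    (r := (FreeGroup.of 2)⁻¹ * FreeGroup.of 5 * FreeGroup.of 0) (by simp [trefoilTemplateRels])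
  simpa only [map_mul, map_inv, mkT, A, B, C, D, E, F] using h

lemma hE : E = A⁻¹ * B := by
  calc E = A⁻¹ * (A * E * B⁻¹) * B := by group
  _ = A⁻¹ * 1 * B := by rw [h1]
  _ = A⁻¹ * B := by group

lemma hD : D = A * B⁻¹ := by
  have := h4
  have : D = A * B⁻¹ := by
    have h := h4
    calc D = A * (A⁻¹ * D * B) * B⁻¹ := by group
    _ = A * 1 * B⁻¹ := by rw [h4]
    _ = A * B⁻¹ := by group
  exact this

lemma hC : C = B⁻¹ * A * B := by
  calc C = E⁻¹ * B * (B⁻¹ * E * C) := by group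
  _ = E⁻¹ * B * 1 := by rw [h5]
  _ = B⁻¹ * A * B := by rw [hE]; group

lemma relT : A * B * A = B * A * B := by
  have h := h3
  rw [hC, hD] at h
  calc A * B * A = B * (B⁻¹ * A * B * (A * B⁻¹) * A⁻¹) * A * B := by group
  _ = B * 1 * A * B := by rw [h]
  _ = B * A * B := by group

lemma hC' : C = A * B * A⁻¹ := by
  rw [hC]
  calc B⁻¹ * A * B = B⁻¹ * (A * B * A) * A⁻¹ := by group
  _ = B⁻¹ * (B * A * B) * A⁻¹ := by rw [relT]
  _ = A * B * A⁻¹ := by group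

lemma hF : F = B⁻¹ * A * B * A⁻¹ := by
  calc F = B⁻¹ * (B * F * C⁻¹) * C := by group
  _ = B⁻¹ * 1 * C := by rw [h2]
  _ = B⁻¹ * A * B * A⁻¹ := by rw [hC']; group

def φgen : Fin 6 → K
  | 0 => X
  | 1 => Y
  | 2 => X * Y * X⁻¹
  | 3 => X * Y⁻¹
  | 4 => X⁻¹ * Y
  | 5 => Y⁻¹ * X * Y * X⁻¹

@[simp] lemma φgen0 : φgen 0 = X := rfl
@[simp] lemma φgen1 : φgen 1 = Y := rfl
@[simp] lemma φgen2 : φgen 2 = X * Y * X⁻¹ := rfl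
@[simp] lemma φgen3 : φgen 3 = X * Y⁻¹ := rfl
@[simp] lemma φgen4 : φgen 4 = X⁻¹ * Y := rfl
@[simp] lemma φgen5 : φgen 5 = Y⁻¹ * X * Y * X⁻¹ := rfl

def φ : T →* K :=
  PresentedGroup.toGroup (f := φgen) (by
    intro r hr
    simp only [trefoilTemplateRels, Set.mem_insert_iff, Set.mem_singleton_iff] at hr
    have k : Y * X * Y = X * Y * X := relK.symm
    rcases hr with h | h | h | h | h | h <;> subst h <;>
      simp only [map_mul, map_inv, FreeGroup.lift_apply_of, φgen0, φgen1, φgen2, φgen3, φgen4, φgen5]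
    · group
    · group
    · group
    · group
    · calc Y⁻¹ * (X⁻¹ * Y) * (X * Y * X⁻¹) = Y⁻¹ * X⁻¹ * (Y * X * Y) * X⁻¹ := by group
      _ = Y⁻¹ * X⁻¹ * (X * Y * X) * X⁻¹ := by rw [k]
      _ = 1 := by group
    · calc (X * Y * X⁻¹)⁻¹ * (Y⁻¹ * X * Y * X⁻¹) * X
          = (Y⁻¹ * X⁻¹ * (Y * X * Y) * X⁻¹)⁻¹ := by group
      _ = (Y⁻¹ * X⁻¹ * (X * Y * X) * X⁻¹)⁻¹ := by rw [k]
      _ = 1 := by group)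

def ψgen : Fin 2 → T
  | 0 => A
  | 1 => B

def ψ : K →* T :=
  PresentedGroup.toGroup (f := ψgen) (by
    intro r hr
    simp only [trefoilKnotRels, Set.mem_singleton_iff] at hr
    subst hr
    simp only [map_mul, map_inv, FreeGroup.lift_apply_of]
    show ψgen 0 * ψgen 1 * ψgen 0 * (ψgen 1 * ψgen 0 * ψgen 1)⁻¹ = 1
    show A * B * A * (B * A * B)⁻¹ = 1
    rw [mul_inv_eq_one, relT])

@[simp] lemma φA : φ A = X := PresentedGroup.toGroup.of _
@[simp] lemma φB : φ B = Y := PresentedGroup.toGroup.of _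
@[simp] lemma ψX : ψ X = A := PresentedGroup.toGroup.of _
@[simp] lemma ψY : ψ Y = B := PresentedGroup.toGroup.of _

theorem main : Nonempty (T ≃* K) := by
  refine ⟨MonoidHom.toMulEquiv φ ψ ?_ ?_⟩
  · ext i
    fin_cases i <;>
      simp only [MonoidHom.comp_apply, MonoidHom.id_apply]
    · show ψ (φ A) = A; simp
    · show ψ (φ B) = B; simp
    · show ψ (φ C) = C
      have : φ C = X * Y * X⁻¹ := PresentedGroup.toGroup.of _
      rw [this]; simp only [map_mul, map_inv, ψX, ψY]; rw [hC']
    · show ψ (φ D) = D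
      have : φ D = X * Y⁻¹ := PresentedGroup.toGroup.of _
      rw [this]; simp only [map_mul, map_inv, ψX, ψY]; rw [hD]
    · show ψ (φ E) = E
      have : φ E = X⁻¹ * Y := PresentedGroup.toGroup.of _
      rw [this]; simp only [map_mul, map_inv, ψX, ψY]; rw [hE]
    · show ψ (φ F) = F
      have : φ F = Y⁻¹ * X * Y * X⁻¹ := PresentedGroup.toGroup.of _
      rw [this]; simp only [map_mul, map_inv, ψX, ψY]; rw [hF]
  · ext i
    fin_cases i <;> simp only [MonoidHom.comp_apply, MonoidHom.id_apply]
    · show φ (ψ X) = X; simp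
    · show φ (ψ Y) = Y; simp

end TrefoilAux

/-- The trefoil template presentation
`⟨a,b,c,d,e,f | a·e·b⁻¹, b·f·c⁻¹, c·d·a⁻¹, a⁻¹·d·b, b⁻¹·e·c, c⁻¹·f·a⟩`
is isomorphic to the trefoil knot group `⟨x, y | x·y·x = y·x·y⟩`. -/
theorem trefoil_template_iso_trefoil_knot_group :
    Nonempty (PresentedGroup trefoilTemplateRels ≃* PresentedGroup trefoilKnotRels) :=
  TrefoilAux.main
end

section
/- The group presented on two generators x, y with the single relation x·y·x = y·x·y (the trefoil knot group) is not abelian; in particular it is not isomorphic to the additive group of integers ℤ. -/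
/-- Map generators to transpositions in `S₃`. -/
def trefoilToPerm : Fin 2 → Equiv.Perm (Fin 3) :=
  ![Equiv.swap 0 1, Equiv.swap 1 2]

lemma trefoil_rels_hold : ∀ r ∈ trefoilKnotRels,
    FreeGroup.lift trefoilToPerm r = 1 := by
  intro r hr
  simp only [trefoilKnotRels, Set.mem_singleton_iff] at hr
  subst hr
  simp only [map_mul, map_inv, FreeGroup.lift_apply_of, trefoilToPerm]
  decide

/-- The induced homomorphism to `S₃`. -/
def trefoilHom : PresentedGroup trefoilKnotRels →* Equiv.Perm (Fin 3) :=
  PresentedGroup.toGroup trefoil_rels_hold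

/-- The trefoil knot group `⟨x, y | x·y·x = y·x·y⟩` is not abelian; in
particular it is not isomorphic to the (additive) group of integers `ℤ`. -/
theorem trefoil_knot_group_not_abelian_not_int :
    (∃ g h : PresentedGroup trefoilKnotRels, g * h ≠ h * g) ∧
    IsEmpty (PresentedGroup trefoilKnotRels ≃* Multiplicative ℤ) := by
  have key : (PresentedGroup.of 0 : PresentedGroup trefoilKnotRels) * PresentedGroup.of 1 ≠
      PresentedGroup.of 1 * PresentedGroup.of 0 := by
    intro h
    have := congrArg trefoilHom h
    simp only [map_mul, trefoilHom, PresentedGroup.toGroup.of, trefoilToPerm] at this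
    exact absurd this (by decide)
  refine ⟨⟨_, _, key⟩, ⟨fun e => key ?_⟩⟩
  have : e (PresentedGroup.of 0 * PresentedGroup.of 1) =
      e (PresentedGroup.of 1 * PresentedGroup.of 0) := by
    simp only [map_mul]
    exact mul_comm _ _
  exact e.injective this
end

section
/- The group presented on six generators a, b, c, d, e, f with relations a·e·b⁻¹, b·f·c⁻¹, c·d·a⁻¹, a⁻¹·d·b, b⁻¹·e·c, c⁻¹·f·a (the trefoil template presentation) is not isomorphic to the group presented on six generators a, b, c, d, e, f with relations a, b, b·e⁻¹, a·d⁻¹, c·d·b·f·c⁻¹·a⁻¹, b⁻¹·c⁻¹·f·a·e·c (the unknot template presentation); that is, the template's presentation of the fundamental group distinguishes the trefoil from this presentation of the unknot. -/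
/-- The six relations of the unknot template presentation on generators
`a, b, c, d, e, f` (encoded as `0, …, 5 : Fin 6`):
`a`, `b`, `b·e⁻¹`, `a·d⁻¹`, `c·d·b·f·c⁻¹·a⁻¹`, `b⁻¹·c⁻¹·f·a·e·c`. -/
def unknotTemplateRels : Set (FreeGroup (Fin 6)) :=
  let a := FreeGroup.of (0 : Fin 6)
  let b := FreeGroup.of (1 : Fin 6)
  let c := FreeGroup.of (2 : Fin 6)
  let d := FreeGroup.of (3 : Fin 6)
  let e := FreeGroup.of (4 : Fin 6)
  let f := FreeGroup.of (5 : Fin 6)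
  {a, b, b * e⁻¹, a * d⁻¹, c * d * b * f * c⁻¹ * a⁻¹, b⁻¹ * c⁻¹ * f * a * e * c}

/-- assignment of generators to permutations of `Fin 3` witnessing nonabelianness. -/
def trefPerm : Fin 6 → Equiv.Perm (Fin 3)
  | 0 => Equiv.swap 0 1
  | 1 => Equiv.swap 1 2
  | 2 => Equiv.swap 0 2
  | _ => Equiv.swap 0 1 * Equiv.swap 1 2

lemma trefPerm_rels : ∀ r ∈ trefoilTemplateRels, FreeGroup.lift trefPerm r = 1 := by
  intro r hr
  simp only [trefoilTemplateRels, Set.mem_insert_iff, Set.mem_singleton_iff] at hr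
  rcases hr with rfl | rfl | rfl | rfl | rfl | rfl <;>
    simp only [map_mul, map_inv, FreeGroup.lift_apply_of] <;> decide

/-- The trefoil template group is nonabelian: `of 0` and `of 1` do not commute. -/
lemma trefoil_noncomm :
    (PresentedGroup.of 0 : PresentedGroup trefoilTemplateRels) * PresentedGroup.of 1 ≠
      PresentedGroup.of 1 * PresentedGroup.of 0 := by
  intro h
  have := congrArg (PresentedGroup.toGroup trefPerm_rels) h
  simp only [map_mul, PresentedGroup.toGroup.of] at this
  revert this
  decide

lemma unknot_key : ∀ r ∈ unknotTemplateRels, PresentedGroup.mk unknotTemplateRels r = 1 :=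
  fun r hr => (QuotientGroup.eq_one_iff r).mpr (Subgroup.subset_normalClosure hr)

lemma unknot_comm (x y : PresentedGroup unknotTemplateRels) : x * y = y * x := by
  have h0 : (PresentedGroup.of 0 : PresentedGroup unknotTemplateRels) = 1 :=
    unknot_key _ (by simp [unknotTemplateRels])
  have h1 : (PresentedGroup.of 1 : PresentedGroup unknotTemplateRels) = 1 :=
    unknot_key _ (by simp [unknotTemplateRels])
  have h4 : (PresentedGroup.of 4 : PresentedGroup unknotTemplateRels) = 1 := by
    have := unknot_key (FreeGroup.of 1 * (FreeGroup.of 4)⁻¹) (by simp [unknotTemplateRels])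
    simp only [map_mul, map_inv] at this
    have : (PresentedGroup.of 1 : PresentedGroup unknotTemplateRels) *
        (PresentedGroup.of 4)⁻¹ = 1 := this
    rw [h1, one_mul, inv_eq_one] at this
    exact this
  have h3 : (PresentedGroup.of 3 : PresentedGroup unknotTemplateRels) = 1 := by
    have := unknot_key (FreeGroup.of 0 * (FreeGroup.of 3)⁻¹) (by simp [unknotTemplateRels])
    simp only [map_mul, map_inv] at this
    have : (PresentedGroup.of 0 : PresentedGroup unknotTemplateRels) *
        (PresentedGroup.of 3)⁻¹ = 1 := this
    rw [h0, one_mul, inv_eq_one] at this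
    exact this
  have h5 : (PresentedGroup.of 5 : PresentedGroup unknotTemplateRels) = 1 := by
    have := unknot_key (FreeGroup.of 2 * FreeGroup.of 3 * FreeGroup.of 1 * FreeGroup.of 5 *
      (FreeGroup.of 2)⁻¹ * (FreeGroup.of 0)⁻¹) (by simp [unknotTemplateRels])
    simp only [map_mul, map_inv] at this
    have h : (PresentedGroup.of 2 : PresentedGroup unknotTemplateRels) * PresentedGroup.of 3 *
        PresentedGroup.of 1 * PresentedGroup.of 5 * (PresentedGroup.of 2)⁻¹ *
        (PresentedGroup.of 0)⁻¹ = 1 := this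
    rw [h0, h1, h3, inv_one, mul_one, mul_one, mul_one] at h
    have h' : (PresentedGroup.of 2 : PresentedGroup unknotTemplateRels) * PresentedGroup.of 5 =
        PresentedGroup.of 2 := by
      have := congrArg (· * (PresentedGroup.of 2 : PresentedGroup unknotTemplateRels)) h
      simpa [mul_assoc] using this
    exact mul_left_cancel (a := (PresentedGroup.of 2 : PresentedGroup unknotTemplateRels))
      (by rw [h', mul_one])
  -- every generator lies in zpowers (of 2)
  have hgen : ∀ i : Fin 6,
      (PresentedGroup.of i : PresentedGroup unknotTemplateRels) ∈
        Subgroup.zpowers (PresentedGroup.of 2 : PresentedGroup unknotTemplateRels) := by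
    intro i
    fin_cases i
    · exact h0 ▸ one_mem _
    · exact h1 ▸ one_mem _
    · exact Subgroup.mem_zpowers _
    · exact h3 ▸ one_mem _
    · exact h4 ▸ one_mem _
    · exact h5 ▸ one_mem _
  have htop : (⊤ : Subgroup (PresentedGroup unknotTemplateRels)) ≤
      Subgroup.zpowers (PresentedGroup.of 2) := by
    rw [← PresentedGroup.closure_range_of unknotTemplateRels]
    exact Subgroup.closure_le _ |>.mpr (by rintro _ ⟨i, rfl⟩; exact hgen i)
  obtain ⟨m, hm⟩ := htop (Subgroup.mem_top x)
  obtain ⟨n, hn⟩ := htop (Subgroup.mem_top y)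
  rw [← hm, ← hn, ← zpow_add, ← zpow_add, add_comm]

/-- The trefoil template presentation is not isomorphic to the unknot template
presentation: the template's presentation of the fundamental group
distinguishes the trefoil from this presentation of the unknot. -/
theorem trefoil_template_not_iso_unknot_template :
    IsEmpty (PresentedGroup trefoilTemplateRels ≃* PresentedGroup unknotTemplateRels) := by
  constructor
  intro e
  apply trefoil_noncomm
  apply e.injective
  simp only [map_mul]
  exact unknot_comm _ _
end
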